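/- In the Lie algebra L over a field generated by antisymmetric elements μ_{ijk} (1 ≤ i,j,k ≤ n, distinct indices) with relations Σ_i μ_{ijk} = 0 (sum over i distinct from fixed j,k) and [μ_{ijk}, μ_{pqr}] = 0 for {i,j,k} ∩ {p,q,r} = ∅, the following holds: given any Lie algebra 𝔤 and an invariant element φ ∈ (∧³𝔤)^𝔤, the assignment μ_{ijk} ↦ φ_{ijk} ∈ U(𝔤)^{⊗(n-1)} defines a Lie algebra homomorphism L → U(𝔤)^{⊗(n-1)}. -/

import Mathlib

open scoped TensorProduct

attribute [local instance 100] LieRing.ofAssociativeRing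

namespace MuProofAux

open PiTensorProduct

variable {k : Type*} [Field k] {𝔤 : Type*} [LieRing 𝔤] [LieAlgebra k 𝔤]

variable (k) in
/-- Background-dependent placement function. -/
noncomputable def placedF (n : ℕ) (c : Fin (n-1) → UniversalEnvelopingAlgebra k 𝔤)
    (i j l : Fin (n-1)) (u v w : UniversalEnvelopingAlgebra k 𝔤) : Fin (n-1) → UniversalEnvelopingAlgebra k 𝔤 :=
  fun m => if m = i then u else if m = j then v else if m = l then w else c m

variable (k) in
noncomputable def placedC (n : ℕ) (c : Fin (n-1) → UniversalEnvelopingAlgebra k 𝔤)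
    (i j l : Fin (n-1)) (u v w : UniversalEnvelopingAlgebra k 𝔤) :
    ⨂[k] (_ : Fin (n-1)), UniversalEnvelopingAlgebra k 𝔤 :=
  tprod k (placedF k n c i j l u v w)

section placedlemmas

variable {n : ℕ} (c : Fin (n-1) → UniversalEnvelopingAlgebra k 𝔤) (i j l : Fin (n-1))
  (u u' v v' w w' : UniversalEnvelopingAlgebra k 𝔤)

lemma placedF_eq_update1 :
    placedF k n c i j l u v w
      = Function.update (fun m => if m = j then v else if m = l then w else c m) i u := by
  funext m
  rw [Function.update_apply]
  rfl

lemma placedF_eq_update2 (hij : i ≠ j) :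
    placedF k n c i j l u v w
      = Function.update (fun m => if m = i then u else if m = l then w else c m) j v := by
  funext m
  rw [Function.update_apply]
  unfold placedF
  split_ifs <;> subst_vars <;>
    first | rfl | (exact absurd rfl hij) | (exact absurd rfl hil) | (exact absurd rfl hjl)

lemma placedF_eq_update3 (hil : i ≠ l) (hjl : j ≠ l) :
    placedF k n c i j l u v w
      = Function.update (fun m => if m = i then u else if m = j then v else c m) l w := by
  funext m
  rw [Function.update_apply]
  unfold placedF
  split_ifs <;> subst_vars <;>
    first | rfl | (exact absurd rfl hil) | (exact absurd rfl hjl)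

lemma placedC_sub1 :
    placedC k n c i j l (u - u') v w = placedC k n c i j l u v w - placedC k n c i j l u' v w := by
  unfold placedC
  rw [placedF_eq_update1, placedF_eq_update1, placedF_eq_update1,
    MultilinearMap.map_update_sub]

lemma placedC_sub2 (hij : i ≠ j) :
    placedC k n c i j l u (v - v') w = placedC k n c i j l u v w - placedC k n c i j l u v' w := by
  unfold placedC
  rw [placedF_eq_update2 _ _ _ _ _ _ _ hij, placedF_eq_update2 _ _ _ _ _ _ _ hij,
    placedF_eq_update2 _ _ _ _ _ _ _ hij, MultilinearMap.map_update_sub]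

lemma placedC_sub3 (hil : i ≠ l) (hjl : j ≠ l) :
    placedC k n c i j l u v (w - w') = placedC k n c i j l u v w - placedC k n c i j l u v w' := by
  unfold placedC
  rw [placedF_eq_update3 _ _ _ _ _ _ _ hil hjl, placedF_eq_update3 _ _ _ _ _ _ _ hil hjl,
    placedF_eq_update3 _ _ _ _ _ _ _ hil hjl, MultilinearMap.map_update_sub]

lemma placedC_swap12 (hij : i ≠ j) :
    placedC k n c i j l u v w = placedC k n c j i l v u w := by
  refine congrArg (PiTensorProduct.tprod k) (funext fun m => ?_)
  unfold placedF
  split_ifs <;> subst_vars <;>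
    first | rfl | (exact absurd rfl hij) | (exact absurd rfl (Ne.symm hij))

lemma placedC_swap23 (hil : i ≠ l) (hjl : j ≠ l) :
    placedC k n c i j l u v w = placedC k n c i l j u w v := by
  refine congrArg (PiTensorProduct.tprod k) (funext fun m => ?_)
  unfold placedF
  split_ifs <;> subst_vars <;>
    first
    | rfl
    | (exact absurd rfl hil)
    | (exact absurd rfl hjl)
    | (exact absurd rfl (Ne.symm hil))
    | (exact absurd rfl (Ne.symm hjl))

lemma placedC_add1 :
    placedC k n c i j l (u + u') v w = placedC k n c i j l u v w + placedC k n c i j l u' v w := by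
  unfold placedC
  rw [placedF_eq_update1, placedF_eq_update1, placedF_eq_update1, MultilinearMap.map_update_add]

lemma placedC_smul1 (a : k) :
    placedC k n c i j l (a • u) v w = a • placedC k n c i j l u v w := by
  unfold placedC
  rw [placedF_eq_update1, placedF_eq_update1, MultilinearMap.map_update_smul]

lemma placedC_add2 (hij : i ≠ j) :
    placedC k n c i j l u (v + v') w = placedC k n c i j l u v w + placedC k n c i j l u v' w := by
  unfold placedC
  rw [placedF_eq_update2 _ _ _ _ _ _ _ hij, placedF_eq_update2 _ _ _ _ _ _ _ hij,
    placedF_eq_update2 _ _ _ _ _ _ _ hij, MultilinearMap.map_update_add]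

lemma placedC_smul2 (hij : i ≠ j) (a : k) :
    placedC k n c i j l u (a • v) w = a • placedC k n c i j l u v w := by
  unfold placedC
  rw [placedF_eq_update2 _ _ _ _ _ _ _ hij, placedF_eq_update2 _ _ _ _ _ _ _ hij,
    MultilinearMap.map_update_smul]

lemma placedC_add3 (hil : i ≠ l) (hjl : j ≠ l) :
    placedC k n c i j l u v (w + w') = placedC k n c i j l u v w + placedC k n c i j l u v w' := by
  unfold placedC
  rw [placedF_eq_update3 _ _ _ _ _ _ _ hil hjl, placedF_eq_update3 _ _ _ _ _ _ _ hil hjl,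
    placedF_eq_update3 _ _ _ _ _ _ _ hil hjl, MultilinearMap.map_update_add]

lemma placedC_smul3 (hil : i ≠ l) (hjl : j ≠ l) (a : k) :
    placedC k n c i j l u v (a • w) = a • placedC k n c i j l u v w := by
  unfold placedC
  rw [placedF_eq_update3 _ _ _ _ _ _ _ hil hjl, placedF_eq_update3 _ _ _ _ _ _ _ hil hjl,
    MultilinearMap.map_update_smul]

end placedlemmas

/-- `⁅y, ∑⁆ = ∑ ⁅y,·⁆` -/
lemma lie_sum' {L : Type*} [LieRing L] (y : L) {α : Type*} (s : Finset α) (f : α → L) :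
    ⁅y, ∑ i ∈ s, f i⁆ = ∑ i ∈ s, ⁅y, f i⁆ :=
  map_sum (AddMonoidHom.mk' (fun a => ⁅y, a⁆) (lie_add y)) f s

section LPhi

variable (k) in
/-- The linear map `𝔤 ⊗ (𝔤 ⊗ 𝔤) → ⨂ U(𝔤)` induced by `placedC`. -/
noncomputable def LPhi (n : ℕ) (c : Fin (n-1) → UniversalEnvelopingAlgebra k 𝔤)
    (i j l : Fin (n-1)) (hij : i ≠ j) (hil : i ≠ l) (hjl : j ≠ l) :
    𝔤 ⊗[k] (𝔤 ⊗[k] 𝔤) →ₗ[k] ⨂[k] (_ : Fin (n-1)), UniversalEnvelopingAlgebra k 𝔤 :=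
  TensorProduct.lift
  { toFun := fun u => TensorProduct.lift (LinearMap.mk₂ k
      (fun v w => placedC k n c i j l (UniversalEnvelopingAlgebra.ι k u)
        (UniversalEnvelopingAlgebra.ι k v) (UniversalEnvelopingAlgebra.ι k w))
      (fun v v' w => by rw [map_add, placedC_add2 _ _ _ _ _ _ _ _ hij])
      (fun a v w => by rw [map_smul, placedC_smul2 _ _ _ _ _ _ _ hij])
      (fun v w w' => by rw [map_add, placedC_add3 _ _ _ _ _ _ _ _ hil hjl])
      (fun a v w => by rw [map_smul, placedC_smul3 _ _ _ _ _ _ _ hil hjl]))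
    map_add' := fun u u' => by
      apply TensorProduct.ext'
      intro v w
      simp only [TensorProduct.lift.tmul, LinearMap.mk₂_apply, LinearMap.add_apply]
      rw [map_add, placedC_add1]
    map_smul' := fun a u => by
      apply TensorProduct.ext'
      intro v w
      simp only [TensorProduct.lift.tmul, LinearMap.mk₂_apply, RingHom.id_apply,
        LinearMap.smul_apply]
      rw [map_smul, placedC_smul1] }

@[simp] lemma LPhi_tmul (n : ℕ) (c : Fin (n-1) → UniversalEnvelopingAlgebra k 𝔤)
    (i j l : Fin (n-1)) (hij : i ≠ j) (hil : i ≠ l) (hjl : j ≠ l) (u v w : 𝔤) :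
    LPhi k n c i j l hij hil hjl (u ⊗ₜ[k] (v ⊗ₜ[k] w))
      = placedC k n c i j l (UniversalEnvelopingAlgebra.ι k u)
        (UniversalEnvelopingAlgebra.ι k v) (UniversalEnvelopingAlgebra.ι k w) := by
  unfold LPhi
  simp [TensorProduct.lift.tmul]

end LPhi


section phi3

variable {ι : Type*} [Fintype ι]

variable (k) in
/-- `φ` placed in slots `i j l` over background `c`. -/
noncomputable def phi3 (n : ℕ) (x y z : ι → 𝔤) (c : Fin (n-1) → UniversalEnvelopingAlgebra k 𝔤)
    (i j l : Fin (n-1)) : ⨂[k] (_ : Fin (n-1)), UniversalEnvelopingAlgebra k 𝔤 :=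
  ∑ s, placedC k n c i j l (UniversalEnvelopingAlgebra.ι k (x s))
    (UniversalEnvelopingAlgebra.ι k (y s)) (UniversalEnvelopingAlgebra.ι k (z s))

variable {n : ℕ} {x y z : ι → 𝔤}

lemma phi3_eq_LPhi (c : Fin (n-1) → UniversalEnvelopingAlgebra k 𝔤)
    {i j l : Fin (n-1)} (hij : i ≠ j) (hil : i ≠ l) (hjl : j ≠ l) :
    phi3 k n x y z c i j l
      = LPhi k n c i j l hij hil hjl (∑ s, x s ⊗ₜ[k] (y s ⊗ₜ[k] z s)) := by
  rw [map_sum]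
  simp only [LPhi_tmul]
  rfl

lemma phi3_swap12
    (halt₁ : ∑ s, x s ⊗ₜ[k] (y s ⊗ₜ[k] z s) = -∑ s, y s ⊗ₜ[k] (x s ⊗ₜ[k] z s))
    (c : Fin (n-1) → UniversalEnvelopingAlgebra k 𝔤)
    {i j l : Fin (n-1)} (hij : i ≠ j) (hil : i ≠ l) (hjl : j ≠ l) :
    phi3 k n x y z c i j l = - phi3 k n x y z c j i l := by
  rw [phi3_eq_LPhi c hij hil hjl, halt₁, map_neg, map_sum]
  unfold phi3
  rw [neg_inj]
  refine Finset.sum_congr rfl fun s _ => ?_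
  rw [LPhi_tmul]
  exact placedC_swap12 c i j l _ _ _ hij

lemma phi3_swap23
    (halt₂ : ∑ s, x s ⊗ₜ[k] (y s ⊗ₜ[k] z s) = -∑ s, x s ⊗ₜ[k] (z s ⊗ₜ[k] y s))
    (c : Fin (n-1) → UniversalEnvelopingAlgebra k 𝔤)
    {i j l : Fin (n-1)} (hij : i ≠ j) (hil : i ≠ l) (hjl : j ≠ l) :
    phi3 k n x y z c i j l = - phi3 k n x y z c i l j := by
  rw [phi3_eq_LPhi c hij hil hjl, halt₂, map_neg, map_sum]
  unfold phi3
  rw [neg_inj]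
  refine Finset.sum_congr rfl fun s _ => ?_
  rw [LPhi_tmul]
  exact placedC_swap23 c i j l _ _ _ hil hjl

lemma tprod_comm' {n : ℕ} (f g : Fin (n-1) → UniversalEnvelopingAlgebra k 𝔤)
    (h : ∀ m, f m = 1 ∨ g m = 1) :
    PiTensorProduct.tprod k f * PiTensorProduct.tprod k g
      = PiTensorProduct.tprod k g * PiTensorProduct.tprod k f := by
  rw [tprod_mul_tprod, tprod_mul_tprod]
  refine congrArg (PiTensorProduct.tprod k) (funext fun m => ?_)
  show f m * g m = g m * f m
  rcases h m with h | h <;> rw [h] <;> rw [one_mul, mul_one]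

lemma phi3_lie_disjoint {i j l p q r : Fin (n-1)}
    (hip : i ≠ p) (hiq : i ≠ q) (hir : i ≠ r)
    (hjp : j ≠ p) (hjq : j ≠ q) (hjr : j ≠ r)
    (hlp : l ≠ p) (hlq : l ≠ q) (hlr : l ≠ r) :
    ⁅phi3 k n x y z 1 i j l, phi3 k n x y z 1 p q r⁆ = 0 := by
  rw [Ring.lie_def, sub_eq_zero]
  unfold phi3 placedC
  rw [Finset.sum_mul_sum, Finset.sum_mul_sum, Finset.sum_comm]
  refine Finset.sum_congr rfl fun s _ => Finset.sum_congr rfl fun t _ => ?_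
  refine tprod_comm' _ _ fun m => ?_
  by_cases hm : m = p ∨ m = q ∨ m = r
  · left
    unfold placedF
    have h1 : m ≠ i := by rintro rfl; rcases hm with rfl | rfl | rfl <;> simp_all
    have h2 : m ≠ j := by rintro rfl; rcases hm with rfl | rfl | rfl <;> simp_all
    have h3 : m ≠ l := by rintro rfl; rcases hm with rfl | rfl | rfl <;> simp_all
    rw [if_neg h1, if_neg h2, if_neg h3]
    rfl
  · right
    push_neg at hm
    unfold placedF
    rw [if_neg hm.1, if_neg hm.2.1, if_neg hm.2.2]
    rfl

end phi3


section inv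

variable {ι : Type*} [Fintype ι] {n : ℕ} {x y z : ι → 𝔤}

lemma phi3_lie_update₁ (c : Fin (n-1) → UniversalEnvelopingAlgebra k 𝔤) {p q r : Fin (n-1)}
    (hpq : p ≠ q) (hpr : p ≠ r) (hqr : q ≠ r) (hcq : c q = 1) (hcr : c r = 1)
    (u : UniversalEnvelopingAlgebra k 𝔤) :
    ⁅phi3 k n x y z 1 p q r, PiTensorProduct.tprod k (Function.update c p u)⁆
      = ∑ s, placedC k n c p q r
          (UniversalEnvelopingAlgebra.ι k (x s) * u - u * UniversalEnvelopingAlgebra.ι k (x s))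
          (UniversalEnvelopingAlgebra.ι k (y s)) (UniversalEnvelopingAlgebra.ι k (z s)) := by
  rw [Ring.lie_def]
  unfold phi3
  rw [Finset.sum_mul, Finset.mul_sum, ← Finset.sum_sub_distrib]
  refine Finset.sum_congr rfl fun s _ => ?_
  rw [placedC_sub1]
  unfold placedC
  rw [tprod_mul_tprod, tprod_mul_tprod]
  congr 1 <;>
  · refine congrArg (PiTensorProduct.tprod k) (funext fun m => ?_)
    rw [Pi.mul_apply, Function.update_apply]
    unfold placedF
    split_ifs <;> subst_vars <;> simp_all

lemma phi3_lie_update₂ (c : Fin (n-1) → UniversalEnvelopingAlgebra k 𝔤) {p q r : Fin (n-1)}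
    (hpq : p ≠ q) (hpr : p ≠ r) (hqr : q ≠ r) (hcp : c p = 1) (hcr : c r = 1)
    (u : UniversalEnvelopingAlgebra k 𝔤) :
    ⁅phi3 k n x y z 1 p q r, PiTensorProduct.tprod k (Function.update c q u)⁆
      = ∑ s, placedC k n c p q r (UniversalEnvelopingAlgebra.ι k (x s))
          (UniversalEnvelopingAlgebra.ι k (y s) * u - u * UniversalEnvelopingAlgebra.ι k (y s))
          (UniversalEnvelopingAlgebra.ι k (z s)) := by
  rw [Ring.lie_def]
  unfold phi3
  rw [Finset.sum_mul, Finset.mul_sum, ← Finset.sum_sub_distrib]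
  refine Finset.sum_congr rfl fun s _ => ?_
  rw [placedC_sub2 _ _ _ _ _ _ _ _ hpq]
  unfold placedC
  rw [tprod_mul_tprod, tprod_mul_tprod]
  congr 1 <;>
  · refine congrArg (PiTensorProduct.tprod k) (funext fun m => ?_)
    rw [Pi.mul_apply, Function.update_apply]
    unfold placedF
    split_ifs <;> subst_vars <;> simp_all

lemma phi3_lie_update₃ (c : Fin (n-1) → UniversalEnvelopingAlgebra k 𝔤) {p q r : Fin (n-1)}
    (hpq : p ≠ q) (hpr : p ≠ r) (hqr : q ≠ r) (hcp : c p = 1) (hcq : c q = 1)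
    (u : UniversalEnvelopingAlgebra k 𝔤) :
    ⁅phi3 k n x y z 1 p q r, PiTensorProduct.tprod k (Function.update c r u)⁆
      = ∑ s, placedC k n c p q r (UniversalEnvelopingAlgebra.ι k (x s))
          (UniversalEnvelopingAlgebra.ι k (y s))
          (UniversalEnvelopingAlgebra.ι k (z s) * u - u * UniversalEnvelopingAlgebra.ι k (z s)) := by
  rw [Ring.lie_def]
  unfold phi3
  rw [Finset.sum_mul, Finset.mul_sum, ← Finset.sum_sub_distrib]
  refine Finset.sum_congr rfl fun s _ => ?_
  rw [placedC_sub3 _ _ _ _ _ _ _ _ hpr hqr]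
  unfold placedC
  rw [tprod_mul_tprod, tprod_mul_tprod]
  congr 1 <;>
  · refine congrArg (PiTensorProduct.tprod k) (funext fun m => ?_)
    rw [Pi.mul_apply, Function.update_apply]
    unfold placedF
    split_ifs <;> subst_vars <;> simp_all

lemma phi3_lie_inv
    (hinv : ∀ g : 𝔤,
      ∑ s, (⁅g, x s⁆ ⊗ₜ[k] (y s ⊗ₜ[k] z s) + x s ⊗ₜ[k] (⁅g, y s⁆ ⊗ₜ[k] z s)
            + x s ⊗ₜ[k] (y s ⊗ₜ[k] ⁅g, z s⁆)) = (0 : 𝔤 ⊗[k] (𝔤 ⊗[k] 𝔤)))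
    {p q r a b : Fin (n-1)}
    (hpq : p ≠ q) (hpr : p ≠ r) (hqr : q ≠ r)
    (hpa : p ≠ a) (hpb : p ≠ b) (hqa : q ≠ a) (hqb : q ≠ b) (hra : r ≠ a) (hrb : r ≠ b)
    (hab : a ≠ b) :
    ⁅phi3 k n x y z 1 p q r, phi3 k n x y z 1 p a b⁆
      + ⁅phi3 k n x y z 1 p q r, phi3 k n x y z 1 q a b⁆
      + ⁅phi3 k n x y z 1 p q r, phi3 k n x y z 1 r a b⁆ = 0 := by
  classical
  have hcomm : ∀ g h : 𝔤,
      UniversalEnvelopingAlgebra.ι k g * UniversalEnvelopingAlgebra.ι k h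
        - UniversalEnvelopingAlgebra.ι k h * UniversalEnvelopingAlgebra.ι k g
        = UniversalEnvelopingAlgebra.ι k ⁅g, h⁆ := fun g h => by
    rw [LieHom.map_lie, Ring.lie_def]
  set cf : ι → Fin (n-1) → UniversalEnvelopingAlgebra k 𝔤 := fun t m =>
    if m = a then UniversalEnvelopingAlgebra.ι k (y t)
    else if m = b then UniversalEnvelopingAlgebra.ι k (z t) else 1 with hcf
  have hrw : ∀ e : Fin (n-1), phi3 k n x y z 1 e a b
      = ∑ t, PiTensorProduct.tprod k
          (Function.update (cf t) e (UniversalEnvelopingAlgebra.ι k (x t))) := by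
    intro e
    unfold phi3 placedC
    refine Finset.sum_congr rfl fun t _ => congrArg _ (funext fun m => ?_)
    rw [Function.update_apply]
    unfold placedF
    simp only [hcf]
    split_ifs <;> simp_all
  rw [hrw p, hrw q, hrw r, lie_sum', lie_sum', lie_sum', ← Finset.sum_add_distrib,
    ← Finset.sum_add_distrib]
  refine Finset.sum_eq_zero fun t _ => ?_
  have hcp : cf t p = 1 := by simp [hcf, if_neg hpa, if_neg hpb]
  have hcq : cf t q = 1 := by simp [hcf, if_neg hqa, if_neg hqb]
  have hcr : cf t r = 1 := by simp [hcf, if_neg hra, if_neg hrb]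
  rw [phi3_lie_update₁ (cf t) hpq hpr hqr hcq hcr, phi3_lie_update₂ (cf t) hpq hpr hqr hcp hcr,
    phi3_lie_update₃ (cf t) hpq hpr hqr hcp hcq, ← Finset.sum_add_distrib,
    ← Finset.sum_add_distrib]
  have h0 : ∑ s, (⁅x s, x t⁆ ⊗ₜ[k] (y s ⊗ₜ[k] z s) + x s ⊗ₜ[k] (⁅y s, x t⁆ ⊗ₜ[k] z s)
      + x s ⊗ₜ[k] (y s ⊗ₜ[k] ⁅z s, x t⁆)) = (0 : 𝔤 ⊗[k] (𝔤 ⊗[k] 𝔤)) := by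
    have e : ∀ g h : 𝔤, ⁅g, h⁆ = -⁅h, g⁆ := fun g h => by rw [← lie_skew]
    have hterm : ∀ s : ι, ⁅x s, x t⁆ ⊗ₜ[k] (y s ⊗ₜ[k] z s) + x s ⊗ₜ[k] (⁅y s, x t⁆ ⊗ₜ[k] z s)
        + x s ⊗ₜ[k] (y s ⊗ₜ[k] ⁅z s, x t⁆)
        = -(⁅x t, x s⁆ ⊗ₜ[k] (y s ⊗ₜ[k] z s) + x s ⊗ₜ[k] (⁅x t, y s⁆ ⊗ₜ[k] z s)
            + x s ⊗ₜ[k] (y s ⊗ₜ[k] ⁅x t, z s⁆)) := by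
      intro s
      rw [e (x s) (x t), e (y s) (x t), e (z s) (x t)]
      simp only [TensorProduct.neg_tmul, TensorProduct.tmul_neg, neg_add]
    rw [Finset.sum_congr rfl fun s _ => hterm s, Finset.sum_neg_distrib, hinv (x t), neg_zero]
  have hmain : ∑ s, (placedC k n (cf t) p q r
        (UniversalEnvelopingAlgebra.ι k (x s) * UniversalEnvelopingAlgebra.ι k (x t)
          - UniversalEnvelopingAlgebra.ι k (x t) * UniversalEnvelopingAlgebra.ι k (x s))
        (UniversalEnvelopingAlgebra.ι k (y s)) (UniversalEnvelopingAlgebra.ι k (z s))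
      + placedC k n (cf t) p q r (UniversalEnvelopingAlgebra.ι k (x s))
        (UniversalEnvelopingAlgebra.ι k (y s) * UniversalEnvelopingAlgebra.ι k (x t)
          - UniversalEnvelopingAlgebra.ι k (x t) * UniversalEnvelopingAlgebra.ι k (y s))
        (UniversalEnvelopingAlgebra.ι k (z s))
      + placedC k n (cf t) p q r (UniversalEnvelopingAlgebra.ι k (x s))
        (UniversalEnvelopingAlgebra.ι k (y s))
        (UniversalEnvelopingAlgebra.ι k (z s) * UniversalEnvelopingAlgebra.ι k (x t)
          - UniversalEnvelopingAlgebra.ι k (x t) * UniversalEnvelopingAlgebra.ι k (z s)))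
      = LPhi k n (cf t) p q r hpq hpr hqr (∑ s, (⁅x s, x t⁆ ⊗ₜ[k] (y s ⊗ₜ[k] z s)
          + x s ⊗ₜ[k] (⁅y s, x t⁆ ⊗ₜ[k] z s) + x s ⊗ₜ[k] (y s ⊗ₜ[k] ⁅z s, x t⁆))) := by
    rw [map_sum]
    refine Finset.sum_congr rfl fun s _ => ?_
    rw [map_add, map_add, LPhi_tmul, LPhi_tmul, LPhi_tmul, hcomm, hcomm, hcomm]
  rw [hmain, h0, map_zero]

end inv


lemma sum_lie' {L : Type*} [LieRing L] (y : L) {α : Type*} (s : Finset α) (f : α → L) :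
    ⁅∑ i ∈ s, f i, y⁆ = ∑ i ∈ s, ⁅f i, y⁆ :=
  map_sum (AddMonoidHom.mk' (fun a => ⁅a, y⁆) (fun a b => add_lie a b y)) f s

lemma sum_reindex {M : Type*} [AddCommMonoid M] {n : ℕ} (s : Finset (Fin n))
    (t : Finset (Fin (n-1))) (f : Fin n → M) (g : Fin (n-1) → M)
    (hst : ∀ a ∈ s, (a : ℕ) < n - 1)
    (hmem : ∀ (a : Fin n) (h : (a:ℕ) < n - 1), a ∈ s ↔ (⟨(a:ℕ), h⟩ : Fin (n-1)) ∈ t)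
    (hval : ∀ (a : Fin n) (h : (a:ℕ) < n-1), a ∈ s → f a = g ⟨(a:ℕ), h⟩) :
    ∑ a ∈ s, f a = ∑ m ∈ t, g m := by
  refine Finset.sum_bij' (fun a ha => (⟨(a:ℕ), hst a ha⟩ : Fin (n-1)))
    (fun m _ => Fin.castLE (Nat.sub_le n 1) m) (fun a ha => (hmem a (hst a ha)).mp ha)
    (fun m hm => ?_) (fun a ha => rfl) (fun m hm => rfl) (fun a ha => hval a (hst a ha) ha)
  rw [hmem _ m.isLt]
  exact hm

lemma double_antisym_zero {α M : Type*} [Fintype α] [DecidableEq α] [AddCommGroup M]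
    (l' : α) (F : α → α → M)
    (hF : ∀ a b, a ≠ b → a ≠ l' → b ≠ l' → F a b = - F b a) :
    ∑ a ∈ Finset.univ.filter (· ≠ l'),
      ∑ b ∈ Finset.univ.filter (fun b => b ≠ a ∧ b ≠ l'), F a b = 0 := by
  classical
  set s : Finset α := Finset.univ.filter (· ≠ l') with hs
  have hinner : ∀ a : α, Finset.univ.filter (fun b => b ≠ a ∧ b ≠ l')
      = s.filter (fun b => b ≠ a) := by
    intro a; ext b; simp [hs, and_comm]
  have step1 : ∑ a ∈ s, ∑ b ∈ Finset.univ.filter (fun b => b ≠ a ∧ b ≠ l'), F a b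
      = ∑ p ∈ s ×ˢ s, (if p.2 ≠ p.1 then F p.1 p.2 else 0) := by
    rw [Finset.sum_product]
    refine Finset.sum_congr rfl fun a _ => ?_
    rw [hinner a, Finset.sum_filter]
  rw [step1]
  refine Finset.sum_involution (fun p _ => (p.2, p.1)) ?_ ?_ ?_ ?_
  · intro p hp
    rcases Finset.mem_product.mp hp with ⟨h1, h2⟩
    by_cases hne : p.1 = p.2
    · simp [hne]
    · rw [if_pos (Ne.symm hne), if_pos hne]
      rw [hF p.1 p.2 hne (Finset.mem_filter.mp h1).2 (Finset.mem_filter.mp h2).2]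
      exact neg_add_cancel _
  · intro p hp hne0
    intro hcontra
    have : p.2 = p.1 := congrArg Prod.fst hcontra
    rw [if_neg (by simp [this])] at hne0
    exact hne0 rfl
  · intro p hp
    rcases Finset.mem_product.mp hp with ⟨h1, h2⟩
    exact Finset.mem_product.mpr ⟨h2, h1⟩
  · intro p hp
    rfl

section finn

variable {ι : Type*} [Fintype ι]

variable (k) in
noncomputable def Ssum (n : ℕ) (x y z : ι → 𝔤) (i j : Fin (n-1)) :
    ⨂[k] (_ : Fin (n-1)), UniversalEnvelopingAlgebra k 𝔤 :=
  ∑ m ∈ Finset.univ.filter (fun m => m ≠ i ∧ m ≠ j), phi3 k n x y z 1 m i j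

lemma small_of_big {n : ℕ} {a b : Fin n} (h : ¬(a:ℕ) < n-1) (hab : a ≠ b) : (b:ℕ) < n-1 := by
  have h1 := a.isLt
  have h2 := b.isLt
  have h3 : (a:ℕ) ≠ (b:ℕ) := fun hh => hab (Fin.ext hh)
  omega

lemma mkeq {n : ℕ} {a b : Fin n} (ha : (a:ℕ) < n-1) (hb : (b:ℕ) < n-1) (h : a = b) :
    (⟨(a:ℕ), ha⟩ : Fin (n-1)) = ⟨(b:ℕ), hb⟩ := by subst h; rfl

lemma mkne {n : ℕ} {a b : Fin n} (ha : (a:ℕ) < n-1) (hb : (b:ℕ) < n-1) (h : a ≠ b) :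
    (⟨(a:ℕ), ha⟩ : Fin (n-1)) ≠ ⟨(b:ℕ), hb⟩ := by
  intro hh
  have : ((⟨(a:ℕ), ha⟩ : Fin (n-1)) : ℕ) = ((⟨(b:ℕ), hb⟩ : Fin (n-1)) : ℕ) := by rw [hh]
  exact h (Fin.ext this)

variable (k) in
noncomputable def PhiGen (n : ℕ) (x y z : ι → 𝔤) :
    Fin n × Fin n × Fin n → ⨂[k] (_ : Fin (n-1)), UniversalEnvelopingAlgebra k 𝔤 := fun t =>
  if hd : t.1 ≠ t.2.1 ∧ t.1 ≠ t.2.2 ∧ t.2.1 ≠ t.2.2 then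
    if ha : (t.1 : ℕ) < n-1 then
      if hb : (t.2.1 : ℕ) < n-1 then
        if hc : (t.2.2 : ℕ) < n-1 then
          phi3 k n x y z 1 ⟨(t.1 : ℕ), ha⟩ ⟨(t.2.1 : ℕ), hb⟩ ⟨(t.2.2 : ℕ), hc⟩
        else - Ssum k n x y z ⟨(t.1 : ℕ), ha⟩ ⟨(t.2.1 : ℕ), hb⟩
      else Ssum k n x y z ⟨(t.1 : ℕ), ha⟩ ⟨(t.2.2 : ℕ), small_of_big hb hd.2.2⟩
    else - Ssum k n x y z ⟨(t.2.1 : ℕ), small_of_big ha hd.1⟩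
      ⟨(t.2.2 : ℕ), small_of_big ha hd.2.1⟩
  else 0

variable {n : ℕ} {x y z : ι → 𝔤}

lemma PhiGen_ndist {i j l : Fin n} (h : ¬(i ≠ j ∧ i ≠ l ∧ j ≠ l)) :
    PhiGen k n x y z (i, j, l) = 0 := dif_neg h

lemma PhiGen_sss {i j l : Fin n} (hd : i ≠ j ∧ i ≠ l ∧ j ≠ l)
    (ha : (i:ℕ) < n-1) (hb : (j:ℕ) < n-1) (hc : (l:ℕ) < n-1) :
    PhiGen k n x y z (i, j, l) = phi3 k n x y z 1 ⟨(i:ℕ), ha⟩ ⟨(j:ℕ), hb⟩ ⟨(l:ℕ), hc⟩ := by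
  unfold PhiGen
  rw [dif_pos hd, dif_pos ha, dif_pos hb, dif_pos hc]

lemma PhiGen_ssb {i j l : Fin n} (hd : i ≠ j ∧ i ≠ l ∧ j ≠ l)
    (ha : (i:ℕ) < n-1) (hb : (j:ℕ) < n-1) (hc : ¬(l:ℕ) < n-1) :
    PhiGen k n x y z (i, j, l) = - Ssum k n x y z ⟨(i:ℕ), ha⟩ ⟨(j:ℕ), hb⟩ := by
  unfold PhiGen
  rw [dif_pos hd, dif_pos ha, dif_pos hb, dif_neg hc]

lemma PhiGen_sbs {i j l : Fin n} (hd : i ≠ j ∧ i ≠ l ∧ j ≠ l)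
    (ha : (i:ℕ) < n-1) (hb : ¬(j:ℕ) < n-1) (hc : (l:ℕ) < n-1) :
    PhiGen k n x y z (i, j, l) = Ssum k n x y z ⟨(i:ℕ), ha⟩ ⟨(l:ℕ), hc⟩ := by
  unfold PhiGen
  rw [dif_pos hd, dif_pos ha, dif_neg hb]

lemma PhiGen_bss {i j l : Fin n} (hd : i ≠ j ∧ i ≠ l ∧ j ≠ l)
    (ha : ¬(i:ℕ) < n-1) (hb : (j:ℕ) < n-1) (hc : (l:ℕ) < n-1) :
    PhiGen k n x y z (i, j, l) = - Ssum k n x y z ⟨(j:ℕ), hb⟩ ⟨(l:ℕ), hc⟩ := by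
  unfold PhiGen
  rw [dif_pos hd, dif_neg ha]

end finn



section rels

variable {ι : Type*} [Fintype ι] {n : ℕ} {x y z : ι → 𝔤}

lemma Ssum_comm
    (halt₂ : ∑ s, x s ⊗ₜ[k] (y s ⊗ₜ[k] z s) = -∑ s, x s ⊗ₜ[k] (z s ⊗ₜ[k] y s))
    {i j : Fin (n-1)} (hij : i ≠ j) :
    Ssum k n x y z i j = - Ssum k n x y z j i := by
  unfold Ssum
  have hset : Finset.univ.filter (fun m : Fin (n-1) => m ≠ i ∧ m ≠ j)
      = Finset.univ.filter (fun m => m ≠ j ∧ m ≠ i) := by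
    ext m; simp [and_comm]
  have hterm : ∀ m ∈ Finset.univ.filter (fun m : Fin (n-1) => m ≠ i ∧ m ≠ j),
      phi3 k n x y z 1 m i j = - phi3 k n x y z 1 m j i := by
    intro m hm
    rcases Finset.mem_filter.mp hm with ⟨-, hmi, hmj⟩
    exact phi3_swap23 halt₂ 1 hmi hmj hij
  rw [Finset.sum_congr rfl hterm, Finset.sum_neg_distrib, neg_inj]
  exact Finset.sum_congr hset (fun _ _ => rfl)

lemma PhiGen_swap12
    (halt₁ : ∑ s, x s ⊗ₜ[k] (y s ⊗ₜ[k] z s) = -∑ s, y s ⊗ₜ[k] (x s ⊗ₜ[k] z s))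
    (halt₂ : ∑ s, x s ⊗ₜ[k] (y s ⊗ₜ[k] z s) = -∑ s, x s ⊗ₜ[k] (z s ⊗ₜ[k] y s))
    (i j l : Fin n) :
    PhiGen k n x y z (i, j, l) + PhiGen k n x y z (j, i, l) = 0 := by
  by_cases hd : i ≠ j ∧ i ≠ l ∧ j ≠ l
  · obtain ⟨hij, hil, hjl⟩ := hd
    have hd1 : i ≠ j ∧ i ≠ l ∧ j ≠ l := ⟨hij, hil, hjl⟩
    have hd2 : j ≠ i ∧ j ≠ l ∧ i ≠ l := ⟨hij.symm, hjl, hil⟩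
    by_cases ha : (i:ℕ) < n-1
    · by_cases hb : (j:ℕ) < n-1
      · by_cases hc : (l:ℕ) < n-1
        · rw [PhiGen_sss hd1 ha hb hc, PhiGen_sss hd2 hb ha hc,
            phi3_swap12 halt₁ 1 (mkne ha hb hij) (mkne ha hc hil) (mkne hb hc hjl)]
          exact neg_add_cancel _
        · rw [PhiGen_ssb hd1 ha hb hc, PhiGen_ssb hd2 hb ha hc,
            Ssum_comm halt₂ (mkne ha hb hij)]
          rw [neg_neg]
          exact add_neg_cancel _
      · rw [PhiGen_sbs hd1 ha hb (small_of_big hb hjl), PhiGen_bss hd2 hb ha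
          (small_of_big hb hjl)]
        exact add_neg_cancel _
    · rw [PhiGen_bss hd1 ha (small_of_big ha hij) (small_of_big ha hil),
        PhiGen_sbs hd2 (small_of_big ha hij) ha (small_of_big ha hil)]
      exact neg_add_cancel _
  · have hd2 : ¬(j ≠ i ∧ j ≠ l ∧ i ≠ l) := by tauto
    rw [PhiGen_ndist hd, PhiGen_ndist hd2, add_zero]

lemma PhiGen_swap23
    (halt₁ : ∑ s, x s ⊗ₜ[k] (y s ⊗ₜ[k] z s) = -∑ s, y s ⊗ₜ[k] (x s ⊗ₜ[k] z s))
    (halt₂ : ∑ s, x s ⊗ₜ[k] (y s ⊗ₜ[k] z s) = -∑ s, x s ⊗ₜ[k] (z s ⊗ₜ[k] y s))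
    (i j l : Fin n) :
    PhiGen k n x y z (i, j, l) + PhiGen k n x y z (i, l, j) = 0 := by
  by_cases hd : i ≠ j ∧ i ≠ l ∧ j ≠ l
  · obtain ⟨hij, hil, hjl⟩ := hd
    have hd1 : i ≠ j ∧ i ≠ l ∧ j ≠ l := ⟨hij, hil, hjl⟩
    have hd2 : i ≠ l ∧ i ≠ j ∧ l ≠ j := ⟨hil, hij, hjl.symm⟩
    by_cases ha : (i:ℕ) < n-1
    · by_cases hb : (j:ℕ) < n-1
      · by_cases hc : (l:ℕ) < n-1
        · rw [PhiGen_sss hd1 ha hb hc, PhiGen_sss hd2 ha hc hb,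
            phi3_swap23 halt₂ 1 (mkne ha hb hij) (mkne ha hc hil) (mkne hb hc hjl)]
          exact neg_add_cancel _
        · rw [PhiGen_ssb hd1 ha hb hc, PhiGen_sbs hd2 ha hc hb]
          exact neg_add_cancel _
      · rw [PhiGen_sbs hd1 ha hb (small_of_big hb hjl), PhiGen_ssb hd2 ha
          (small_of_big hb hjl) hb]
        exact add_neg_cancel _
    · rw [PhiGen_bss hd1 ha (small_of_big ha hij) (small_of_big ha hil),
        PhiGen_bss hd2 ha (small_of_big ha hil) (small_of_big ha hij),
        Ssum_comm halt₂ (mkne (small_of_big ha hij) (small_of_big ha hil) hjl)]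
      rw [neg_neg]
      exact add_neg_cancel _
  · have hd2 : ¬(i ≠ l ∧ i ≠ j ∧ l ≠ j) := by tauto
    rw [PhiGen_ndist hd, PhiGen_ndist hd2, add_zero]

lemma PhiGen_sum
    (halt₁ : ∑ s, x s ⊗ₜ[k] (y s ⊗ₜ[k] z s) = -∑ s, y s ⊗ₜ[k] (x s ⊗ₜ[k] z s))
    {j l : Fin n} (hjl : j ≠ l) :
    ∑ i ∈ Finset.univ.filter (fun i : Fin n => i ≠ j ∧ i ≠ l),
      PhiGen k n x y z (i, j, l) = 0 := by
  have hn : 2 ≤ n := by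
    have h1 := j.isLt
    have h2 := l.isLt
    have h3 : (j:ℕ) ≠ (l:ℕ) := fun hh => hjl (Fin.ext hh)
    omega
  by_cases hb : (j:ℕ) < n-1
  · by_cases hc : (l:ℕ) < n-1
    · -- both small : split off the top index
      set lastF : Fin n := ⟨n-1, by omega⟩ with hlast
      have hlb : ¬((lastF : ℕ) < n-1) := by simp [hlast]
      have hlj : lastF ≠ j := fun hh => by rw [hh] at hlb; exact hlb hb
      have hll : lastF ≠ l := fun hh => by rw [hh] at hlb; exact hlb hc
      have hmem : lastF ∈ Finset.univ.filter (fun i : Fin n => i ≠ j ∧ i ≠ l) := by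
        simp [hlj, hll]
      rw [← Finset.add_sum_erase _ _ hmem]
      have h1 : PhiGen k n x y z (lastF, j, l) = - Ssum k n x y z ⟨(j:ℕ), hb⟩ ⟨(l:ℕ), hc⟩ :=
        PhiGen_bss ⟨hlj, hll, hjl⟩ hlb hb hc
      have h2 : ∑ i ∈ (Finset.univ.filter (fun i : Fin n => i ≠ j ∧ i ≠ l)).erase lastF,
          PhiGen k n x y z (i, j, l) = Ssum k n x y z ⟨(j:ℕ), hb⟩ ⟨(l:ℕ), hc⟩ := by
        unfold Ssum
        refine sum_reindex _ _ _ _ ?_ ?_ ?_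
        · intro a ha
          rcases Finset.mem_erase.mp ha with ⟨hne, _⟩
          have := a.isLt
          have : (a:ℕ) ≠ n-1 := fun hh => hne (Fin.ext (by simp [hlast, hh]))
          omega
        · intro a h
          simp only [Finset.mem_erase, Finset.mem_filter, Finset.mem_univ, true_and]
          constructor
          · rintro ⟨-, haj, hal⟩
            exact ⟨mkne h hb haj, mkne h hc hal⟩
          · rintro ⟨haj, hal⟩
            refine ⟨fun hh => ?_,
              fun hh => haj (mkeq h hb hh),
              fun hh => hal (mkeq h hc hh)⟩
            rw [hh] at h
            simp [hlast] at h
        · intro a h ha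
          rcases Finset.mem_erase.mp ha with ⟨-, ha2⟩
          rcases Finset.mem_filter.mp ha2 with ⟨-, haj, hal⟩
          exact PhiGen_sss ⟨haj, hal, hjl⟩ h hb hc
      rw [h1, h2]
      exact neg_add_cancel _
    · -- l is big
      have h2 : ∑ i ∈ Finset.univ.filter (fun i : Fin n => i ≠ j ∧ i ≠ l),
          PhiGen k n x y z (i, j, l)
          = ∑ m ∈ Finset.univ.filter (fun m : Fin (n-1) => m ≠ ⟨(j:ℕ), hb⟩),
              - Ssum k n x y z m ⟨(j:ℕ), hb⟩ := by
        refine sum_reindex _ _ _ _ ?_ ?_ ?_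
        · intro a ha
          rcases Finset.mem_filter.mp ha with ⟨-, -, hal⟩
          exact small_of_big hc hal.symm
        · intro a h
          simp only [Finset.mem_filter, Finset.mem_univ, true_and]
          constructor
          · rintro ⟨haj, -⟩
            exact mkne h hb haj
          · intro haj
            refine ⟨fun hh => haj (mkeq h hb hh), fun hh => hc ?_⟩
            rw [← hh]
            exact h
        · intro a h ha
          rcases Finset.mem_filter.mp ha with ⟨-, haj, hal⟩
          exact PhiGen_ssb ⟨haj, hal, hjl⟩ h hb hc
      rw [h2, Finset.sum_neg_distrib, neg_eq_zero]
      have := double_antisym_zero (M := ⨂[k] (_ : Fin (n-1)), UniversalEnvelopingAlgebra k 𝔤)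
        (⟨(j:ℕ), hb⟩ : Fin (n-1)) (fun a b => phi3 k n x y z 1 b a ⟨(j:ℕ), hb⟩)
        (fun a b hab haj hbj => phi3_swap12 halt₁ 1 hab.symm hbj haj)
      exact this
  · -- j is big
    have hc : (l:ℕ) < n-1 := small_of_big hb hjl
    have h2 : ∑ i ∈ Finset.univ.filter (fun i : Fin n => i ≠ j ∧ i ≠ l),
        PhiGen k n x y z (i, j, l)
        = ∑ m ∈ Finset.univ.filter (fun m : Fin (n-1) => m ≠ ⟨(l:ℕ), hc⟩),
            Ssum k n x y z m ⟨(l:ℕ), hc⟩ := by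
      refine sum_reindex _ _ _ _ ?_ ?_ ?_
      · intro a ha
        rcases Finset.mem_filter.mp ha with ⟨-, haj, -⟩
        exact small_of_big hb haj.symm
      · intro a h
        simp only [Finset.mem_filter, Finset.mem_univ, true_and]
        constructor
        · rintro ⟨-, hal⟩
          exact mkne h hc hal
        · intro hal
          refine ⟨fun hh => hb ?_, fun hh => hal (mkeq h hc hh)⟩
          rw [← hh]
          exact h
      · intro a h ha
        rcases Finset.mem_filter.mp ha with ⟨-, haj, hal⟩
        exact PhiGen_sbs ⟨haj, hal, hjl⟩ h hb hc
    rw [h2]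
    exact double_antisym_zero (⟨(l:ℕ), hc⟩ : Fin (n-1))
      (fun a b => phi3 k n x y z 1 b a ⟨(l:ℕ), hc⟩)
      (fun a b hab hal hbl => phi3_swap12 halt₁ 1 hab.symm hbl hal)

end rels


section brackets

variable {ι : Type*} [Fintype ι] {n : ℕ} {x y z : ι → 𝔤}

lemma Ssum_lie_phi3
    (hinv : ∀ g : 𝔤,
      ∑ s, (⁅g, x s⁆ ⊗ₜ[k] (y s ⊗ₜ[k] z s) + x s ⊗ₜ[k] (⁅g, y s⁆ ⊗ₜ[k] z s)
            + x s ⊗ₜ[k] (y s ⊗ₜ[k] ⁅g, z s⁆)) = (0 : 𝔤 ⊗[k] (𝔤 ⊗[k] 𝔤)))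
    {a b p q r : Fin (n-1)}
    (hpq : p ≠ q) (hpr : p ≠ r) (hqr : q ≠ r)
    (hpa : p ≠ a) (hpb : p ≠ b) (hqa : q ≠ a) (hqb : q ≠ b) (hra : r ≠ a) (hrb : r ≠ b)
    (hab : a ≠ b) :
    ⁅Ssum k n x y z a b, phi3 k n x y z 1 p q r⁆ = 0 := by
  classical
  unfold Ssum
  rw [sum_lie']
  have hsub : ({p, q, r} : Finset (Fin (n-1)))
      ⊆ Finset.univ.filter (fun m => m ≠ a ∧ m ≠ b) := by
    intro m hm
    simp only [Finset.mem_insert, Finset.mem_singleton] at hm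
    rcases hm with rfl | rfl | rfl <;> simp_all
  rw [← Finset.sum_sdiff hsub]
  have h1 : ∑ m ∈ (Finset.univ.filter (fun m : Fin (n-1) => m ≠ a ∧ m ≠ b))
      \ ({p, q, r} : Finset (Fin (n-1))),
      ⁅phi3 k n x y z 1 m a b, phi3 k n x y z 1 p q r⁆ = 0 := by
    refine Finset.sum_eq_zero fun m hm => ?_
    rcases Finset.mem_sdiff.mp hm with ⟨hm1, hm2⟩
    rcases Finset.mem_filter.mp hm1 with ⟨-, hma, hmb⟩
    simp only [Finset.mem_insert, Finset.mem_singleton, not_or] at hm2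
    exact phi3_lie_disjoint hm2.1 hm2.2.1 hm2.2.2 (fun h => hpa h.symm) (fun h => hqa h.symm)
      (fun h => hra h.symm) (fun h => hpb h.symm) (fun h => hqb h.symm) (fun h => hrb h.symm)
  have h2 : ∑ m ∈ ({p, q, r} : Finset (Fin (n-1))),
      ⁅phi3 k n x y z 1 m a b, phi3 k n x y z 1 p q r⁆ = 0 := by
    rw [Finset.sum_insert (by simp [hpq, hpr]), Finset.sum_insert (by simp [hqr]),
      Finset.sum_singleton]
    have hflip : ∀ X Y : ⨂[k] (_ : Fin (n-1)), UniversalEnvelopingAlgebra k 𝔤,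
        ⁅X, Y⁆ = -⁅Y, X⁆ := fun X Y => by rw [← lie_skew]
    rw [hflip (phi3 k n x y z 1 p a b), hflip (phi3 k n x y z 1 q a b),
      hflip (phi3 k n x y z 1 r a b), ← neg_add, ← neg_add, neg_eq_zero]
    rw [← add_assoc]
    exact phi3_lie_inv hinv hpq hpr hqr hpa hpb hqa hqb hra hrb hab
  rw [h1, h2, add_zero]

lemma PhiGen_lie
    (hinv : ∀ g : 𝔤,
      ∑ s, (⁅g, x s⁆ ⊗ₜ[k] (y s ⊗ₜ[k] z s) + x s ⊗ₜ[k] (⁅g, y s⁆ ⊗ₜ[k] z s)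
            + x s ⊗ₜ[k] (y s ⊗ₜ[k] ⁅g, z s⁆)) = (0 : 𝔤 ⊗[k] (𝔤 ⊗[k] 𝔤)))
    {i j l p q r : Fin n}
    (hij : i ≠ j) (hil : i ≠ l) (hjl : j ≠ l)
    (hpq : p ≠ q) (hpr : p ≠ r) (hqr : q ≠ r)
    (hip : i ≠ p) (hiq : i ≠ q) (hir : i ≠ r)
    (hjp : j ≠ p) (hjq : j ≠ q) (hjr : j ≠ r)
    (hlp : l ≠ p) (hlq : l ≠ q) (hlr : l ≠ r) :
    ⁅PhiGen k n x y z (i, j, l), PhiGen k n x y z (p, q, r)⁆ = 0 := by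
  classical
  have hd1 : i ≠ j ∧ i ≠ l ∧ j ≠ l := ⟨hij, hil, hjl⟩
  have hd2 : p ≠ q ∧ p ≠ r ∧ q ≠ r := ⟨hpq, hpr, hqr⟩
  have hflip : ∀ X Y : ⨂[k] (_ : Fin (n-1)), UniversalEnvelopingAlgebra k 𝔤,
      ⁅X, Y⁆ = -⁅Y, X⁆ := fun X Y => by rw [← lie_skew]
  by_cases ha : (i:ℕ) < n-1
  · by_cases hb : (j:ℕ) < n-1
    · by_cases hc : (l:ℕ) < n-1
      · -- first triple small
        rw [PhiGen_sss hd1 ha hb hc]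
        by_cases hp : (p:ℕ) < n-1
        · by_cases hq : (q:ℕ) < n-1
          · by_cases hr : (r:ℕ) < n-1
            · rw [PhiGen_sss hd2 hp hq hr]
              exact phi3_lie_disjoint (mkne ha hp hip) (mkne ha hq hiq) (mkne ha hr hir)
                (mkne hb hp hjp) (mkne hb hq hjq) (mkne hb hr hjr)
                (mkne hc hp hlp) (mkne hc hq hlq) (mkne hc hr hlr)
            · rw [PhiGen_ssb hd2 hp hq hr, lie_neg, hflip, neg_eq_zero, neg_eq_zero]
              exact Ssum_lie_phi3 hinv (mkne ha hb hij) (mkne ha hc hil) (mkne hb hc hjl)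
                (mkne ha hp (Ne.symm hip).symm) (mkne ha hq (Ne.symm hiq).symm)
                (mkne hb hp hjp) (mkne hb hq hjq) (mkne hc hp hlp) (mkne hc hq hlq)
                (mkne hp hq hpq)
          · rw [PhiGen_sbs hd2 hp hq (small_of_big hq hqr), hflip, neg_eq_zero]
            exact Ssum_lie_phi3 hinv (mkne ha hb hij) (mkne ha hc hil) (mkne hb hc hjl)
              (mkne ha hp hip) (mkne ha (small_of_big hq hqr) hir)
              (mkne hb hp hjp) (mkne hb (small_of_big hq hqr) hjr)
              (mkne hc hp hlp) (mkne hc (small_of_big hq hqr) hlr)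
              (mkne hp (small_of_big hq hqr) hpr)
        · rw [PhiGen_bss hd2 hp (small_of_big hp hpq) (small_of_big hp hpr), lie_neg, hflip,
            neg_eq_zero, neg_eq_zero]
          exact Ssum_lie_phi3 hinv (mkne ha hb hij) (mkne ha hc hil) (mkne hb hc hjl)
            (mkne ha (small_of_big hp hpq) hiq) (mkne ha (small_of_big hp hpr) hir)
            (mkne hb (small_of_big hp hpq) hjq) (mkne hb (small_of_big hp hpr) hjr)
            (mkne hc (small_of_big hp hpq) hlq) (mkne hc (small_of_big hp hpr) hlr)
            (mkne (small_of_big hp hpq) (small_of_big hp hpr) hqr)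
      · -- l big; p q r small
        have hp : (p:ℕ) < n-1 := small_of_big hc hlp
        have hq : (q:ℕ) < n-1 := small_of_big hc hlq
        have hr : (r:ℕ) < n-1 := small_of_big hc hlr
        rw [PhiGen_ssb hd1 ha hb hc, PhiGen_sss hd2 hp hq hr, neg_lie, neg_eq_zero]
        exact Ssum_lie_phi3 hinv (mkne hp hq hpq) (mkne hp hr hpr) (mkne hq hr hqr)
          (mkne hp ha (Ne.symm hip)) (mkne hp hb (Ne.symm hjp))
          (mkne hq ha (Ne.symm hiq)) (mkne hq hb (Ne.symm hjq))
          (mkne hr ha (Ne.symm hir)) (mkne hr hb (Ne.symm hjr))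
          (mkne ha hb hij)
    · -- j big; p q r small
      have hc : (l:ℕ) < n-1 := small_of_big hb hjl
      have hp : (p:ℕ) < n-1 := small_of_big hb hjp
      have hq : (q:ℕ) < n-1 := small_of_big hb hjq
      have hr : (r:ℕ) < n-1 := small_of_big hb hjr
      rw [PhiGen_sbs hd1 ha hb hc, PhiGen_sss hd2 hp hq hr]
      exact Ssum_lie_phi3 hinv (mkne hp hq hpq) (mkne hp hr hpr) (mkne hq hr hqr)
        (mkne hp ha (Ne.symm hip)) (mkne hp hc (Ne.symm hlp))
        (mkne hq ha (Ne.symm hiq)) (mkne hq hc (Ne.symm hlq))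
        (mkne hr ha (Ne.symm hir)) (mkne hr hc (Ne.symm hlr))
        (mkne ha hc hil)
  · -- i big; p q r small
    have hb : (j:ℕ) < n-1 := small_of_big ha hij
    have hc : (l:ℕ) < n-1 := small_of_big ha hil
    have hp : (p:ℕ) < n-1 := small_of_big ha hip
    have hq : (q:ℕ) < n-1 := small_of_big ha hiq
    have hr : (r:ℕ) < n-1 := small_of_big ha hir
    rw [PhiGen_bss hd1 ha hb hc, PhiGen_sss hd2 hp hq hr, neg_lie, neg_eq_zero]
    exact Ssum_lie_phi3 hinv (mkne hp hq hpq) (mkne hp hr hpr) (mkne hq hr hqr)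
      (mkne hp hb (Ne.symm hjp)) (mkne hp hc (Ne.symm hlp))
      (mkne hq hb (Ne.symm hjq)) (mkne hq hc (Ne.symm hlq))
      (mkne hr hb (Ne.symm hjr)) (mkne hr hc (Ne.symm hlr))
      (mkne hb hc hjl)

end brackets


lemma card3_ne {α : Type*} [DecidableEq α] {i j l : α}
    (h : ({i, j, l} : Finset α).card = 3) : i ≠ j ∧ i ≠ l ∧ j ≠ l := by
  have hp : ∀ u v : α, ({u, v} : Finset α).card ≤ 2 :=
    fun u v => (Finset.card_insert_le _ _).trans (by simp)
  refine ⟨?_, ?_, ?_⟩ <;> rintro rfl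
  · have hsub : ({i, i, l} : Finset α) ⊆ {i, l} := by
      intro a ha; simp only [Finset.mem_insert, Finset.mem_singleton] at ha ⊢; tauto
    have := (Finset.card_le_card hsub).trans (hp i l); omega
  · have hsub : ({i, j, i} : Finset α) ⊆ {i, j} := by
      intro a ha; simp only [Finset.mem_insert, Finset.mem_singleton] at ha ⊢; tauto
    have := (Finset.card_le_card hsub).trans (hp i j); omega
  · have hsub : ({i, j, j} : Finset α) ⊆ {i, j} := by
      intro a ha; simp only [Finset.mem_insert, Finset.mem_singleton] at ha ⊢; tauto
    have := (Finset.card_le_card hsub).trans (hp i j); omega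

end MuProofAux

open scoped TensorProduct

variable (k : Type*) [Field k]

def muRels (n : ℕ) : Set (FreeLieAlgebra k (Fin n × Fin n × Fin n)) :=
  {w | ∃ i j l, w = FreeLieAlgebra.of k (i, j, l) + FreeLieAlgebra.of k (j, i, l)} ∪
  {w | ∃ i j l, w = FreeLieAlgebra.of k (i, j, l) + FreeLieAlgebra.of k (i, l, j)} ∪
  {w | ∃ i j l : Fin n, ¬(i ≠ j ∧ i ≠ l ∧ j ≠ l) ∧ w = FreeLieAlgebra.of k (i, j, l)} ∪
  {w | ∃ j l : Fin n, j ≠ l ∧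
    w = ∑ i ∈ Finset.univ.filter (fun i : Fin n => i ≠ j ∧ i ≠ l),
          FreeLieAlgebra.of k (i, j, l)} ∪
  {w | ∃ i j l p q r : Fin n, ({i, j, l} : Finset (Fin n)).card = 3 ∧
    ({p, q, r} : Finset (Fin n)).card = 3 ∧
    Disjoint ({i, j, l} : Finset (Fin n)) ({p, q, r} : Finset (Fin n)) ∧
    w = ⁅FreeLieAlgebra.of k (i, j, l), FreeLieAlgebra.of k (p, q, r)⁆}

abbrev muLieAlgebra (n : ℕ) :=
  FreeLieAlgebra k (Fin n × Fin n × Fin n) ⧸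
    LieSubmodule.lieSpan k (FreeLieAlgebra k (Fin n × Fin n × Fin n)) (muRels k n)

variable {𝔤 : Type*} [LieRing 𝔤] [LieAlgebra k 𝔤]

noncomputable def placed (n : ℕ) (i j l : Fin (n - 1))
    (u v w : UniversalEnvelopingAlgebra k 𝔤) :
    ⨂[k] (_ : Fin (n - 1)), UniversalEnvelopingAlgebra k 𝔤 :=
  PiTensorProduct.tprod k fun m => if m = i then u else if m = j then v else if m = l then w else 1

lemma placed_eq_placedC (n : ℕ) (i j l : Fin (n - 1)) (u v w : UniversalEnvelopingAlgebra k 𝔤) :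
    placed k n i j l u v w = MuProofAux.placedC k n 1 i j l u v w := by
  refine congrArg (PiTensorProduct.tprod k) (funext fun m => ?_)
  unfold MuProofAux.placedF
  split_ifs <;> rfl

theorem mu_to_phi_lieHom (n : ℕ) (ι : Type*) [Fintype ι] (x y z : ι → 𝔤)
    (halt₁ : ∑ s, x s ⊗ₜ[k] (y s ⊗ₜ[k] z s) = -∑ s, y s ⊗ₜ[k] (x s ⊗ₜ[k] z s))
    (halt₂ : ∑ s, x s ⊗ₜ[k] (y s ⊗ₜ[k] z s) = -∑ s, x s ⊗ₜ[k] (z s ⊗ₜ[k] y s))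
    (hinv : ∀ g : 𝔤,
      ∑ s, (⁅g, x s⁆ ⊗ₜ[k] (y s ⊗ₜ[k] z s) + x s ⊗ₜ[k] (⁅g, y s⁆ ⊗ₜ[k] z s)
            + x s ⊗ₜ[k] (y s ⊗ₜ[k] ⁅g, z s⁆)) = (0 : 𝔤 ⊗[k] (𝔤 ⊗[k] 𝔤))) :
    ∃ F : muLieAlgebra k n →ₗ⁅k⁆ (⨂[k] (_ : Fin (n - 1)), UniversalEnvelopingAlgebra k 𝔤),
      ∀ (i j l : Fin n) (hi : (i : ℕ) < n - 1) (hj : (j : ℕ) < n - 1) (hl : (l : ℕ) < n - 1),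
        i ≠ j → i ≠ l → j ≠ l →
        F (LieSubmodule.Quotient.mk' _ (FreeLieAlgebra.of k (i, j, l))) =
          ∑ s, placed k n ⟨i, hi⟩ ⟨j, hj⟩ ⟨l, hl⟩
            (UniversalEnvelopingAlgebra.ι k (x s)) (UniversalEnvelopingAlgebra.ι k (y s))
            (UniversalEnvelopingAlgebra.ι k (z s)) := by
  classical
  set G : FreeLieAlgebra k (Fin n × Fin n × Fin n)
      →ₗ⁅k⁆ ⨂[k] (_ : Fin (n - 1)), UniversalEnvelopingAlgebra k 𝔤 :=
    FreeLieAlgebra.lift k (MuProofAux.PhiGen k n x y z) with hG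
  have hsub : muRels k n ⊆ (G.ker : Set (FreeLieAlgebra k (Fin n × Fin n × Fin n))) := by
    intro w hw
    rw [SetLike.mem_coe, LieHom.mem_ker]
    simp only [muRels, Set.mem_union, Set.mem_setOf_eq] at hw
    rcases hw with ((((⟨i, j, l, rfl⟩ | ⟨i, j, l, rfl⟩) | ⟨i, j, l, hnd, rfl⟩)
      | ⟨j, l, hjl, rfl⟩) | ⟨i, j, l, p, q, r, h3a, h3b, hdisj, rfl⟩)
    · rw [map_add, hG, FreeLieAlgebra.lift_of_apply, FreeLieAlgebra.lift_of_apply]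
      exact MuProofAux.PhiGen_swap12 halt₁ halt₂ i j l
    · rw [map_add, hG, FreeLieAlgebra.lift_of_apply, FreeLieAlgebra.lift_of_apply]
      exact MuProofAux.PhiGen_swap23 halt₁ halt₂ i j l
    · rw [hG, FreeLieAlgebra.lift_of_apply]
      exact MuProofAux.PhiGen_ndist hnd
    · have : G (∑ i ∈ Finset.univ.filter (fun i : Fin n => i ≠ j ∧ i ≠ l),
          FreeLieAlgebra.of k (i, j, l))
          = ∑ i ∈ Finset.univ.filter (fun i : Fin n => i ≠ j ∧ i ≠ l),
              G (FreeLieAlgebra.of k (i, j, l)) :=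
        map_sum (G.toLinearMap) _ _
      rw [this, hG]
      simp only [FreeLieAlgebra.lift_of_apply]
      exact MuProofAux.PhiGen_sum halt₁ hjl
    · rw [LieHom.map_lie, hG, FreeLieAlgebra.lift_of_apply, FreeLieAlgebra.lift_of_apply]
      obtain ⟨hij, hil, hjl⟩ := MuProofAux.card3_ne h3a
      obtain ⟨hpq, hpr, hqr⟩ := MuProofAux.card3_ne h3b
      have hd : ∀ a ∈ ({i, j, l} : Finset (Fin n)), ∀ b ∈ ({p, q, r} : Finset (Fin n)),
          a ≠ b := fun a ha b hb hh => (Finset.disjoint_left.mp hdisj ha) (hh ▸ hb)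
      exact MuProofAux.PhiGen_lie hinv hij hil hjl hpq hpr hqr
        (hd i (by simp) p (by simp)) (hd i (by simp) q (by simp)) (hd i (by simp) r (by simp))
        (hd j (by simp) p (by simp)) (hd j (by simp) q (by simp)) (hd j (by simp) r (by simp))
        (hd l (by simp) p (by simp)) (hd l (by simp) q (by simp)) (hd l (by simp) r (by simp))
  have hle : LieSubmodule.lieSpan k (FreeLieAlgebra k (Fin n × Fin n × Fin n)) (muRels k n)
      ≤ G.ker := (LieSubmodule.lieSpan_le).mpr hsub
  have hle' : LieSubmodule.toSubmodule
        (LieSubmodule.lieSpan k (FreeLieAlgebra k (Fin n × Fin n × Fin n)) (muRels k n))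
      ≤ LinearMap.ker (G : FreeLieAlgebra k (Fin n × Fin n × Fin n)
          →ₗ[k] ⨂[k] (_ : Fin (n - 1)), UniversalEnvelopingAlgebra k 𝔤) := by
    rw [← LieHom.ker_toSubmodule]
    exact (LieSubmodule.toSubmodule_le_toSubmodule _ _).mpr hle
  set F0 : muLieAlgebra k n →ₗ[k] ⨂[k] (_ : Fin (n - 1)), UniversalEnvelopingAlgebra k 𝔤 :=
    Submodule.liftQ _ (G : FreeLieAlgebra k (Fin n × Fin n × Fin n)
      →ₗ[k] ⨂[k] (_ : Fin (n - 1)), UniversalEnvelopingAlgebra k 𝔤) hle' with hF0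
  have hF0mk : ∀ w : FreeLieAlgebra k (Fin n × Fin n × Fin n),
      F0 (LieSubmodule.Quotient.mk' _ w) = G w := fun w => rfl
  refine ⟨{ F0 with map_lie' := ?_ }, ?_⟩
  · intro u v
    obtain ⟨a, rfl⟩ := LieSubmodule.Quotient.surjective_mk' _ u
    obtain ⟨b, rfl⟩ := LieSubmodule.Quotient.surjective_mk' _ v
    show F0 ⁅LieSubmodule.Quotient.mk' _ a, LieSubmodule.Quotient.mk' _ b⁆
      = ⁅F0 (LieSubmodule.Quotient.mk' _ a), F0 (LieSubmodule.Quotient.mk' _ b)⁆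
    have hbr : ⁅LieSubmodule.Quotient.mk'
          (LieSubmodule.lieSpan k (FreeLieAlgebra k (Fin n × Fin n × Fin n)) (muRels k n)) a,
        LieSubmodule.Quotient.mk' _ b⁆
        = LieSubmodule.Quotient.mk' _ ⁅a, b⁆ :=
      (LieSubmodule.Quotient.mk_bracket _ a b).symm
    rw [hbr, hF0mk, hF0mk, hF0mk, LieHom.map_lie]
  · intro i j l hi hj hl hij hil hjl
    show F0 (LieSubmodule.Quotient.mk' _ (FreeLieAlgebra.of k (i, j, l))) = _
    rw [hF0mk, hG, FreeLieAlgebra.lift_of_apply,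
      MuProofAux.PhiGen_sss ⟨hij, hil, hjl⟩ hi hj hl]
    unfold MuProofAux.phi3
    refine Finset.sum_congr rfl fun s _ => ?_
    rw [placed_eq_placedC]
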